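/- For every constant c > 0 there exist positive constants c', C and q₀ such that the following holds for every finite field F with |F| = q ≥ q₀. For every subset U ⊆ F³ with n := |U| ≥ q such that |S₄(U)| ≥ c·n⁴, there exists a collection H ⊆ S₄(U) with |H| ≥ c'·n⁴/q, Δ₁(H) ≤ C·n³/q, Δ₂(H) ≤ C·n²/q^{2/3}, and Δ₃(H) ≤ C·n/q^{1/3}. (Dense case of the proof of Theorem 4, obtained by keeping each member of S₄(U) independently with probability 1/q.) -/

import Mathlib

open Finset

noncomputable section

def inPlane (F : Type*) [Field F] (A : Finset (Fin 3 → F)) : Prop :=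
  ∃ P : AffineSubspace F (Fin 3 → F), Module.finrank F P.direction = 2 ∧ ∀ x ∈ A, x ∈ P

open Classical in
def S4 (F : Type*) [Field F] (U : Finset (Fin 3 → F)) : Finset (Finset (Fin 3 → F)) :=
  (U.powersetCard 4).filter (fun A => inPlane F A)

open Classical in
def deg {α : Type*} (H : Finset (Finset α)) (S : Finset α) : ℕ :=
  (H.filter (fun E => S ⊆ E)).card

lemma card_filter_superset_le {α : Type*} [DecidableEq α] (U : Finset α) {S : Finset α} {k : ℕ}
    (hk : S.card = k) {G : Finset (Finset α)} (hG : ∀ A ∈ G, A ⊆ U ∧ A.card = 4) :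
    (G.filter (fun E => S ⊆ E)).card ≤ U.card ^ (4 - k) := by
  have h1 : (G.filter (fun E => S ⊆ E)).card ≤ (U.powersetCard (4 - k)).card := by
    apply Finset.card_le_card_of_injOn (fun A => A \ S)
    · intro A hA
      rw [Finset.mem_coe, Finset.mem_filter] at hA
      obtain ⟨hA1, hSA⟩ := hA
      obtain ⟨hAU, hA4⟩ := hG A hA1
      rw [Finset.mem_coe, Finset.mem_powersetCard]
      exact ⟨Finset.sdiff_subset.trans hAU, by rw [Finset.card_sdiff_of_subset hSA, hA4, hk]⟩
    · intro A hA B hB hAB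
      simp only [Finset.mem_coe, Finset.mem_filter] at hA hB
      simp only at hAB
      have h2 : S ∪ A \ S = S ∪ B \ S := by rw [hAB]
      rwa [Finset.union_sdiff_of_subset hA.2, Finset.union_sdiff_of_subset hB.2] at h2
  calc (G.filter (fun E => S ⊆ E)).card ≤ (U.powersetCard (4 - k)).card := h1
    _ = U.card.choose (4 - k) := by rw [Finset.card_powersetCard]
    _ ≤ U.card ^ (4 - k) := Nat.choose_le_pow _ _

open Classical in
lemma sum_deg {α : Type*} (U : Finset α) (H : Finset (Finset α)) (k : ℕ)
    (hH : ∀ A ∈ H, A ⊆ U ∧ A.card = 4) :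
    ∑ S ∈ U.powersetCard k, deg H S = H.card * Nat.choose 4 k := by
  classical
  have : ∀ S, deg H S = ∑ A ∈ H, if S ⊆ A then 1 else 0 := by
    intro S; rw [deg, Finset.card_filter]
  simp only [this]
  rw [Finset.sum_comm]
  rw [Finset.sum_congr rfl (fun A hA => ?_), Finset.sum_const, smul_eq_mul]
  have hA := hH A hA
  have : ∑ S ∈ U.powersetCard k, (if S ⊆ A then 1 else 0) =
      ((U.powersetCard k).filter (fun S => S ⊆ A)).card := by
    rw [Finset.card_filter]
  rw [this]
  have hfilter : (U.powersetCard k).filter (fun S => S ⊆ A) = A.powersetCard k := by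
    ext S
    simp only [Finset.mem_filter, Finset.mem_powersetCard]
    constructor
    · rintro ⟨⟨_, hc⟩, hSA⟩; exact ⟨hSA, hc⟩
    · rintro ⟨hSA, hc⟩; exact ⟨⟨hSA.trans hA.1, hc⟩, hSA⟩
  rw [hfilter, Finset.card_powersetCard, hA.2]

open Classical in
def nIn {α : Type*} (U : Finset α) (s : Set α) : ℕ :=
  (U.filter (fun x => x ∈ s)).card

open Classical in
lemma sat_card_le {α : Type*} (U : Finset α) (H : Finset (Finset α)) (k : ℕ)
    (hH : ∀ A ∈ H, A ⊆ U ∧ A.card = 4) (t : ℝ) :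
    (((U.powersetCard k).filter (fun S => t ≤ (deg H S : ℝ))).card : ℝ) * t ≤
      (Nat.choose 4 k : ℝ) * H.card := by
  classical
  set sat := (U.powersetCard k).filter (fun S => t ≤ (deg H S : ℝ)) with hsat
  have h1 : (sat.card : ℝ) * t = ∑ _S ∈ sat, t := by rw [Finset.sum_const, nsmul_eq_mul]
  have h2 : ∑ _S ∈ sat, t ≤ ∑ S ∈ sat, (deg H S : ℝ) :=
    Finset.sum_le_sum (fun S hS => (Finset.mem_filter.mp hS).2)
  have h3 : ∑ S ∈ sat, (deg H S : ℝ) ≤ ∑ S ∈ U.powersetCard k, (deg H S : ℝ) :=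
    Finset.sum_le_sum_of_subset_of_nonneg (Finset.filter_subset _ _)
      (fun _ _ _ => by positivity)
  have h4 : ∑ S ∈ U.powersetCard k, (deg H S : ℝ) = (Nat.choose 4 k : ℝ) * H.card := by
    rw [← Nat.cast_sum, sum_deg U H k hH, Nat.cast_mul, mul_comm]
  linarith

theorem stmt3 (c : ℝ) (hc : 0 < c) :
    ∃ c' C : ℝ, 0 < c' ∧ 0 < C ∧ ∃ q₀ : ℕ,
      ∀ (F : Type) [Field F] [Fintype F],
        q₀ ≤ Fintype.card F →
        ∀ U : Finset (Fin 3 → F),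
          Fintype.card F ≤ U.card →
          c * (U.card : ℝ) ^ 4 ≤ ((S4 F U).card : ℝ) →
          ∃ H : Finset (Finset (Fin 3 → F)), H ⊆ S4 F U ∧
            c' * (U.card : ℝ) ^ 4 / (Fintype.card F : ℝ) ≤ (H.card : ℝ) ∧
            (∀ S ⊆ U, S.card = 1 →
              (deg H S : ℝ) ≤ C * (U.card : ℝ) ^ 3 / (Fintype.card F : ℝ)) ∧
            (∀ S ⊆ U, S.card = 2 →
              (deg H S : ℝ) ≤ C * (U.card : ℝ) ^ 2 / (Fintype.card F : ℝ) ^ ((2:ℝ)/3)) ∧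
            (∀ S ⊆ U, S.card = 3 →
              (deg H S : ℝ) ≤ C * (U.card : ℝ) / (Fintype.card F : ℝ) ^ ((1:ℝ)/3)) := by
  classical
  refine ⟨c / 15, 2, by positivity, by norm_num, 1, ?_⟩
  intro F _ _ hq U hn hS4
  set q : ℕ := Fintype.card F with hqdef
  set n : ℕ := U.card with hndef
  have hq1 : (1:ℝ) ≤ (q:ℝ) := by exact_mod_cast hq
  have hq0 : (0:ℝ) < (q:ℝ) := lt_of_lt_of_le zero_lt_one hq1
  have hnq : (q:ℝ) ≤ (n:ℝ) := by exact_mod_cast hn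
  have hn1 : (1:ℝ) ≤ (n:ℝ) := le_trans hq1 hnq
  have hn0 : (0:ℝ) < (n:ℝ) := lt_of_lt_of_le zero_lt_one hn1
  have hq13 : (0:ℝ) < (q:ℝ) ^ ((1:ℝ)/3) := Real.rpow_pos_of_pos hq0 _
  have hq23 : (0:ℝ) < (q:ℝ) ^ ((2:ℝ)/3) := Real.rpow_pos_of_pos hq0 _
  have hq13le : (q:ℝ) ^ ((1:ℝ)/3) ≤ (q:ℝ) := by
    calc (q:ℝ) ^ ((1:ℝ)/3) ≤ (q:ℝ) ^ (1:ℝ) :=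
          Real.rpow_le_rpow_of_exponent_le hq1 (by norm_num)
      _ = (q:ℝ) := Real.rpow_one _
  have hq23le : (q:ℝ) ^ ((2:ℝ)/3) ≤ (q:ℝ) := by
    calc (q:ℝ) ^ ((2:ℝ)/3) ≤ (q:ℝ) ^ (1:ℝ) :=
          Real.rpow_le_rpow_of_exponent_le hq1 (by norm_num)
      _ = (q:ℝ) := Real.rpow_one _
  set t1 : ℝ := (n:ℝ)^3 / (q:ℝ) with ht1def
  set t2 : ℝ := (n:ℝ)^2 / (q:ℝ)^((2:ℝ)/3) with ht2def
  set t3 : ℝ := (n:ℝ) / (q:ℝ)^((1:ℝ)/3) with ht3def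
  have ht1 : 1 ≤ t1 := by rw [ht1def, le_div_iff₀ hq0, one_mul]; nlinarith
  have ht2 : 1 ≤ t2 := by rw [ht2def, le_div_iff₀ hq23, one_mul]; nlinarith
  have ht3 : 1 ≤ t3 := by rw [ht3def, le_div_iff₀ hq13, one_mul]; nlinarith
  -- maximal good subfamily
  set 𝒢 := (S4 F U).powerset.filter (fun H =>
    (∀ S ⊆ U, S.card = 1 → (deg H S : ℝ) ≤ 2 * t1) ∧
    (∀ S ⊆ U, S.card = 2 → (deg H S : ℝ) ≤ 2 * t2) ∧
    (∀ S ⊆ U, S.card = 3 → (deg H S : ℝ) ≤ 2 * t3)) with h𝒢def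
  have hempty : (∅ : Finset (Finset (Fin 3 → F))) ∈ 𝒢 := by
    rw [h𝒢def, Finset.mem_filter, Finset.mem_powerset]
    have hz : ∀ S : Finset (Fin 3 → F), (deg (∅ : Finset (Finset (Fin 3 → F))) S : ℝ) = 0 := by
      intro S
      simp only [deg, Finset.filter_empty, Finset.card_empty, Nat.cast_zero]
    exact ⟨Finset.empty_subset _,
      fun S _ _ => by rw [hz]; linarith,
      fun S _ _ => by rw [hz]; linarith,
      fun S _ _ => by rw [hz]; linarith⟩
  obtain ⟨H, hHmem, hHmax⟩ := Finset.exists_max_image 𝒢 Finset.card ⟨∅, hempty⟩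
  rw [h𝒢def, Finset.mem_filter, Finset.mem_powerset] at hHmem
  obtain ⟨hHsub, hG1, hG2, hG3⟩ := hHmem
  have hHmem4 : ∀ A ∈ H, A ⊆ U ∧ A.card = 4 := by
    intro A hA
    have := hHsub hA
    rw [S4, Finset.mem_filter, Finset.mem_powersetCard] at this
    exact this.1
  have hS4mem4 : ∀ A ∈ S4 F U, A ⊆ U ∧ A.card = 4 := by
    intro A hA
    rw [S4, Finset.mem_filter, Finset.mem_powersetCard] at hA
    exact hA.1
  have hdegins : ∀ (A S : Finset (Fin 3 → F)), A ∉ H →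
      deg (insert A H) S = deg H S + if S ⊆ A then 1 else 0 := by
    intro A S hA
    rw [deg, deg, Finset.filter_insert]
    split
    · rw [Finset.card_insert_of_notMem ?goodcase]
      case goodcase =>
        intro h
        apply hA
        simp only [Finset.mem_filter] at h
        exact h.1
    · rw [add_zero]
  -- saturated sets
  set sat1 := (U.powersetCard 1).filter (fun S => t1 ≤ (deg H S : ℝ)) with hsat1def
  set sat2 := (U.powersetCard 2).filter (fun S => t2 ≤ (deg H S : ℝ)) with hsat2def
  set sat3 := (U.powersetCard 3).filter (fun S => t3 ≤ (deg H S : ℝ)) with hsat3def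
  set f : Finset (Fin 3 → F) → Finset (Finset (Fin 3 → F)) :=
    fun S => (S4 F U).filter (fun E => S ⊆ E) with hfdef
  -- the cover
  have hcover : S4 F U \ H ⊆ (sat1.biUnion f ∪ sat2.biUnion f) ∪ sat3.biUnion f := by
    intro A hA
    rw [Finset.mem_sdiff] at hA
    obtain ⟨hAS4, hAH⟩ := hA
    have hins : insert A H ∉ 𝒢 := by
      intro hmem
      have := hHmax _ hmem
      rw [Finset.card_insert_of_notMem hAH] at this
      omega
    rw [h𝒢def, Finset.mem_filter, Finset.mem_powerset] at hins
    have hsub' : insert A H ⊆ S4 F U := Finset.insert_subset hAS4 hHsub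
    have hNG : ¬ ((∀ S ⊆ U, S.card = 1 → (deg (insert A H) S : ℝ) ≤ 2 * t1) ∧
        (∀ S ⊆ U, S.card = 2 → (deg (insert A H) S : ℝ) ≤ 2 * t2) ∧
        (∀ S ⊆ U, S.card = 3 → (deg (insert A H) S : ℝ) ≤ 2 * t3)) := by
      intro hg
      exact hins ⟨hsub', hg⟩
    rcases not_and_or.mp hNG with h | h'
    · push_neg at h
      obtain ⟨S, hSU, hSc, hlt⟩ := h
      have hdi := hdegins A S hAH
      by_cases hSA : S ⊆ A
      · rw [if_pos hSA] at hdi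
        rw [hdi] at hlt
        push_cast at hlt
        have hsat : t1 ≤ (deg H S : ℝ) := by linarith
        refine Finset.mem_union_left _ (Finset.mem_union_left _ ?_)
        exact Finset.mem_biUnion.mpr ⟨S, Finset.mem_filter.mpr
          ⟨Finset.mem_powersetCard.mpr ⟨hSU, hSc⟩, hsat⟩,
          Finset.mem_filter.mpr ⟨hAS4, hSA⟩⟩
      · rw [if_neg hSA, add_zero] at hdi
        rw [hdi] at hlt
        exact absurd (hG1 S hSU hSc) (not_le.mpr hlt)
    rcases not_and_or.mp h' with h | h
    · push_neg at h
      obtain ⟨S, hSU, hSc, hlt⟩ := h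
      have hdi := hdegins A S hAH
      by_cases hSA : S ⊆ A
      · rw [if_pos hSA] at hdi
        rw [hdi] at hlt
        push_cast at hlt
        have hsat : t2 ≤ (deg H S : ℝ) := by linarith
        refine Finset.mem_union_left _ (Finset.mem_union_right _ ?_)
        exact Finset.mem_biUnion.mpr ⟨S, Finset.mem_filter.mpr
          ⟨Finset.mem_powersetCard.mpr ⟨hSU, hSc⟩, hsat⟩,
          Finset.mem_filter.mpr ⟨hAS4, hSA⟩⟩
      · rw [if_neg hSA, add_zero] at hdi
        rw [hdi] at hlt
        exact absurd (hG2 S hSU hSc) (not_le.mpr hlt)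
    · push_neg at h
      obtain ⟨S, hSU, hSc, hlt⟩ := h
      have hdi := hdegins A S hAH
      by_cases hSA : S ⊆ A
      · rw [if_pos hSA] at hdi
        rw [hdi] at hlt
        push_cast at hlt
        have hsat : t3 ≤ (deg H S : ℝ) := by linarith
        refine Finset.mem_union_right _ ?_
        exact Finset.mem_biUnion.mpr ⟨S, Finset.mem_filter.mpr
          ⟨Finset.mem_powersetCard.mpr ⟨hSU, hSc⟩, hsat⟩,
          Finset.mem_filter.mpr ⟨hAS4, hSA⟩⟩
      · rw [if_neg hSA, add_zero] at hdi
        rw [hdi] at hlt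
        exact absurd (hG3 S hSU hSc) (not_le.mpr hlt)
  -- cardinality bound on the cover
  have hbi : ∀ (k : ℕ) (sat : Finset (Finset (Fin 3 → F))),
      sat ⊆ U.powersetCard k → ((sat.biUnion f).card ≤ sat.card * n ^ (4 - k)) := by
    intro k sat hsatsub
    calc (sat.biUnion f).card ≤ ∑ S ∈ sat, (f S).card := Finset.card_biUnion_le
      _ ≤ ∑ _S ∈ sat, n ^ (4 - k) := by
          refine Finset.sum_le_sum (fun S hS => ?_)
          have hScard : S.card = k := (Finset.mem_powersetCard.mp (hsatsub hS)).2
          exact card_filter_superset_le U hScard hS4mem4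
      _ = sat.card * n ^ (4 - k) := by rw [Finset.sum_const, smul_eq_mul]
  have hsd : ((S4 F U) \ H).card ≤ sat1.card * n ^ 3 + sat2.card * n ^ 2 + sat3.card * n := by
    have h1 := hbi 1 sat1 (Finset.filter_subset _ _)
    have h2 := hbi 2 sat2 (Finset.filter_subset _ _)
    have h3 := hbi 3 sat3 (Finset.filter_subset _ _)
    norm_num at h1 h2 h3
    calc ((S4 F U) \ H).card ≤ ((sat1.biUnion f ∪ sat2.biUnion f) ∪ sat3.biUnion f).card :=
          Finset.card_le_card hcover
      _ ≤ (sat1.biUnion f ∪ sat2.biUnion f).card + (sat3.biUnion f).card :=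
          Finset.card_union_le _ _
      _ ≤ ((sat1.biUnion f).card + (sat2.biUnion f).card) + (sat3.biUnion f).card := by
          have := Finset.card_union_le (sat1.biUnion f) (sat2.biUnion f)
          omega
      _ ≤ sat1.card * n ^ 3 + sat2.card * n ^ 2 + sat3.card * n := by omega
  -- saturation bounds
  have hs1 := sat_card_le U H 1 hHmem4 t1
  have hs2 := sat_card_le U H 2 hHmem4 t2
  have hs3 := sat_card_le U H 3 hHmem4 t3
  rw [← hsat1def] at hs1
  rw [← hsat2def] at hs2
  rw [← hsat3def] at hs3
  norm_num at hs1 hs2 hs3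
  -- convert to bounds on sat_k.card * n^{4-k}
  have hb1 : (sat1.card : ℝ) * (n:ℝ)^3 ≤ 4 * H.card * q := by
    have : (sat1.card : ℝ) * t1 * (q:ℝ) ≤ 4 * H.card * q :=
      mul_le_mul_of_nonneg_right hs1 (le_of_lt hq0)
    rwa [mul_assoc, ht1def, div_mul_cancel₀ _ (ne_of_gt hq0)] at this
  have hb2 : (sat2.card : ℝ) * (n:ℝ)^2 ≤ 6 * H.card * q := by
    have h : (sat2.card : ℝ) * t2 * ((q:ℝ)^((2:ℝ)/3)) ≤ 6 * H.card * ((q:ℝ)^((2:ℝ)/3)) :=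
      mul_le_mul_of_nonneg_right hs2 (le_of_lt hq23)
    rw [mul_assoc, ht2def, div_mul_cancel₀ _ (ne_of_gt hq23)] at h
    calc (sat2.card : ℝ) * (n:ℝ)^2 ≤ 6 * H.card * ((q:ℝ)^((2:ℝ)/3)) := h
      _ ≤ 6 * H.card * q := by
          exact mul_le_mul_of_nonneg_left hq23le (mul_nonneg (by norm_num) (Nat.cast_nonneg _))
  have hb3 : (sat3.card : ℝ) * (n:ℝ) ≤ 4 * H.card * q := by
    have h : (sat3.card : ℝ) * t3 * ((q:ℝ)^((1:ℝ)/3)) ≤ 4 * H.card * ((q:ℝ)^((1:ℝ)/3)) :=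
      mul_le_mul_of_nonneg_right hs3 (le_of_lt hq13)
    rw [mul_assoc, ht3def, div_mul_cancel₀ _ (ne_of_gt hq13)] at h
    calc (sat3.card : ℝ) * (n:ℝ) ≤ 4 * H.card * ((q:ℝ)^((1:ℝ)/3)) := h
      _ ≤ 4 * H.card * q := by
          exact mul_le_mul_of_nonneg_left hq13le (mul_nonneg (by norm_num) (Nat.cast_nonneg _))
  -- total count
  have hcards : ((S4 F U) \ H).card + H.card = (S4 F U).card :=
    Finset.card_sdiff_add_card_eq_card hHsub
  have hsdR : (((S4 F U) \ H).card : ℝ) ≤ (sat1.card:ℝ) * (n:ℝ)^3 + (sat2.card:ℝ) * (n:ℝ)^2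
      + (sat3.card:ℝ) * (n:ℝ) := by exact_mod_cast hsd
  have hmain : c * (n:ℝ)^4 ≤ 15 * (q:ℝ) * (H.card:ℝ) := by
    have h1 : ((S4 F U).card : ℝ) = (((S4 F U) \ H).card : ℝ) + (H.card : ℝ) := by
      exact_mod_cast hcards.symm
    have h2 : (H.card : ℝ) ≤ (H.card : ℝ) * q := le_mul_of_one_le_right (Nat.cast_nonneg _) hq1
    linarith [hS4, hsdR, hb1, hb2, hb3]
  refine ⟨H, hHsub, ?_, ?_, ?_, ?_⟩
  · rw [div_le_iff₀ hq0]
    have : c / 15 * (n:ℝ)^4 = (c * (n:ℝ)^4) / 15 := by ring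
    rw [this, div_le_iff₀ (by norm_num : (0:ℝ) < 15)]
    calc c * (n:ℝ)^4 ≤ 15 * (q:ℝ) * (H.card:ℝ) := hmain
      _ = (H.card:ℝ) * (q:ℝ) * 15 := by ring
  · intro S hSU hSc
    calc (deg H S : ℝ) ≤ 2 * t1 := hG1 S hSU hSc
      _ = 2 * (n:ℝ)^3 / (q:ℝ) := by rw [ht1def]; ring
  · intro S hSU hSc
    calc (deg H S : ℝ) ≤ 2 * t2 := hG2 S hSU hSc
      _ = 2 * (n:ℝ)^2 / (q:ℝ)^((2:ℝ)/3) := by rw [ht2def]; ring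
  · intro S hSU hSc
    calc (deg H S : ℝ) ≤ 2 * t3 := hG3 S hSU hSc
      _ = 2 * (n:ℝ) / (q:ℝ)^((1:ℝ)/3) := by rw [ht3def]; ring
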